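/- For every real x, the sum over all integers m of sinc²(x - m) equals 1, where sinc(y) = sin(πy)/(πy) for y ≠ 0 and sinc(0) = 1. -/

import Mathlib

open Real

noncomputable def sinc (y : ℝ) : ℝ :=
  if y = 0 then 1 else Real.sin (π * y) / (π * y)

open MeasureTheory Complex intervalIntegral

theorem tsum_sinc_sq (x : ℝ) : ∑' m : ℤ, (_root_.sinc (x - (m : ℤ))) ^ 2 = 1 := by
  haveI : Fact ((0:ℝ) < 1) := ⟨zero_lt_one⟩
  set g : ℝ → ℂ := fun t => Complex.exp (2 * π * Complex.I * x * t) with hg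
  set F : AddCircle (1:ℝ) → ℂ := AddCircle.liftIoc 1 0 g with hF
  have hgc : Continuous g := by fun_prop
  have hFm : Measurable F := by
    have : F = (fun y : Set.Ioc (0:ℝ) (0+1) => g y) ∘ (AddCircle.measurableEquivIoc 1 0) := rfl
    rw [this]
    exact (hgc.measurable.comp measurable_subtype_coe).comp
      (AddCircle.measurableEquivIoc 1 0).measurable
  have hFnorm : ∀ t, ‖F t‖ = 1 := by
    intro t
    have : F t = g ((AddCircle.equivIoc 1 0 t : ℝ)) := rfl
    rw [this, hg]
    simp only [Complex.norm_exp]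
    have : (2 * ↑π * Complex.I * ↑x * ↑((AddCircle.equivIoc 1 0 t : ℝ))).re = 0 := by
      simp [Complex.mul_re, Complex.mul_im]
    rw [this, Real.exp_zero]
  have hmem : MemLp F 2 (AddCircle.haarAddCircle) := by
    apply MemLp.of_bound (hFm.aestronglyMeasurable) 1
    filter_upwards with t using le_of_eq (hFnorm t)
  set f : Lp ℂ 2 (AddCircle.haarAddCircle) := hmem.toLp F with hf
  have hcoeff : ∀ n : ℤ, fourierCoeff (⇑f) n = fourierCoeff F n := by
    intro n
    apply MeasureTheory.integral_congr_ae
    filter_upwards [hmem.coeFn_toLp] with t ht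
    rw [ht]
  have parseval := tsum_sq_fourierCoeff f
  have hrhs : ∫ t : AddCircle (1:ℝ), ‖f t‖ ^ 2 ∂AddCircle.haarAddCircle = 1 := by
    rw [MeasureTheory.integral_congr_ae (g := fun _ => (1:ℝ)) ?_, MeasureTheory.integral_const]
    · simp
    · filter_upwards [hmem.coeFn_toLp] with t ht
      rw [ht, hFnorm t, one_pow]
  have hterm : ∀ n : ℤ, ‖fourierCoeff F n‖ ^ 2 = (_root_.sinc (x - n)) ^ 2 := by
    intro n
    have h1 : fourierCoeff F n = fourierCoeffOn (lt_add_of_pos_right (0:ℝ) one_pos) g n :=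
      fourierCoeff_liftIoc_eq g n
    rw [h1, fourierCoeffOn_eq_integral]
    have hint : ∀ t : ℝ, @fourier ((0:ℝ)+1-0) (-n) (t : AddCircle ((0:ℝ)+1-0)) • g t
        = Complex.exp ((2 * π * Complex.I * (x - n)) * t) := by
      intro t
      rw [fourier_coe_apply]
      rw [smul_eq_mul, hg, ← Complex.exp_add]
      congr 1
      push_cast
      ring
    rw [intervalIntegral.integral_congr (fun t _ => hint t)]
    rcases eq_or_ne x n with hx | hx
    · subst hx
      simp [_root_.sinc, sub_self]
    · have hθ : (x - n : ℝ) ≠ 0 := sub_ne_zero.mpr hx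
      have hcn : ((x : ℂ) - n) ≠ 0 := by
        rw [show ((x:ℂ) - n) = ((x - n : ℝ) : ℂ) by push_cast; ring]
        exact_mod_cast hθ
      have hc : (2 * π * Complex.I * (x - n) : ℂ) ≠ 0 :=
        mul_ne_zero (mul_ne_zero (mul_ne_zero two_ne_zero
          (Complex.ofReal_ne_zero.mpr Real.pi_ne_zero)) Complex.I_ne_zero) hcn
      rw [integral_exp_mul_complex hc]
      set θ : ℝ := x - n with hθdef
      have e1 : cexp (2 * ↑π * I * (↑x - ↑n) * ((0:ℝ) + 1 : ℝ)) -
          cexp (2 * ↑π * I * (↑x - ↑n) * ((0:ℝ) : ℂ)) =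
          (↑(Real.cos (2 * π * θ) - 1) : ℂ) + ↑(Real.sin (2 * π * θ)) * I := by
        rw [show (2 * ↑π * I * (↑x - ↑n) * (((0:ℝ) + 1 : ℝ) : ℂ)) = (↑(2 * π * θ) : ℂ) * I by
          rw [hθdef]; push_cast; ring]
        rw [Complex.exp_mul_I]
        push_cast
        simp [mul_comm]
        ring
      have e2 : (2 * ↑π * I * (↑x - ↑n) : ℂ) = (↑(2 * π * θ) : ℂ) * I := by
        rw [hθdef]; push_cast; ring
      rw [e1, e2]
      have hnum : ‖(↑(Real.cos (2*π*θ) - 1) : ℂ) + ↑(Real.sin (2*π*θ)) * I‖^2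
          = (Real.cos (2*π*θ) - 1)^2 + (Real.sin (2*π*θ))^2 := by
        rw [Complex.sq_norm, Complex.normSq_add_mul_I]
      have hden : ‖(↑(2*π*θ) : ℂ) * I‖ = |2*π*θ| := by simp [abs_mul, abs_of_pos Real.pi_pos]
      simp only [norm_smul, norm_div, mul_pow, div_pow]
      rw [hnum, hden]
      have h4 : (Real.cos (2*π*θ) - 1)^2 + (Real.sin (2*π*θ))^2 = 4 * Real.sin (π*θ)^2 := by
        rw [show 2*π*θ = 2*(π*θ) by ring, Real.cos_two_mul, Real.sin_two_mul]
        nlinarith [Real.sin_sq_add_cos_sq (π*θ)]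
      rw [h4, _root_.sinc, if_neg hθ, _root_.sq_abs]
      have hπθ : π * θ ≠ 0 := mul_ne_zero Real.pi_ne_zero hθ
      simp only [norm_one, Real.norm_eq_abs]
      norm_num
      field_simp
      ring
  calc ∑' m : ℤ, (_root_.sinc (x - (m : ℤ))) ^ 2
      = ∑' m : ℤ, ‖fourierCoeff (⇑f) m‖ ^ 2 := by
        refine tsum_congr fun m => ?_
        rw [hcoeff m, hterm m]
    _ = 1 := parseval.trans hrhs
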